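/- Let G be a group and T ≤ C subgroups of G with C ≤ C_G(T). Assume: (i) N_{C_G(T)}(C) = C; (ii) N_G(C) ≤ N_G(T); (iii) for every g ∈ N_G(T) there exists h ∈ C_G(T) such that (C^g)^h = C. Then N_G(T) = C_G(T)·N_G(C), and there is a group isomorphism N_G(C)/C ≅ N_G(T)/C_G(T). -/

import Mathlib

open Pointwise

/-- The conjugate `H^g = g⁻¹ * H * g` of a subgroup `H` by an element `g`. -/
def conjSub {G : Type*} [Group G] (H : Subgroup G) (g : G) : Subgroup G :=
  H.map (MulAut.conj g⁻¹).toMonoidHom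

/-- The centralizer `C_G(T)` is a normal subgroup of the normalizer `N_G(T)`. -/
instance centralizer_subgroupOf_normalizer_normal {G : Type*} [Group G] (T : Subgroup G) :
    ((Subgroup.centralizer (T : Set G)).subgroupOf (Subgroup.normalizer (T : Set G))).Normal := by
  rw [← Subgroup.normalizerMonoidHom_ker]
  exact MonoidHom.normal_ker _

lemma mem_conjSub {G : Type*} [Group G] {H : Subgroup G} {g x : G} :
    x ∈ conjSub H g ↔ g * x * g⁻¹ ∈ H := by
  simp only [conjSub, Subgroup.mem_map, MulEquiv.coe_toMonoidHom, MulAut.conj_apply]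
  constructor
  · rintro ⟨y, hy, rfl⟩
    have : g * (g⁻¹ * y * g⁻¹⁻¹) * g⁻¹ = y := by group
    rwa [this]
  · intro h
    exact ⟨g * x * g⁻¹, h, by group⟩

lemma conjSub_conjSub {G : Type*} [Group G] (H : Subgroup G) (g h : G) :
    conjSub (conjSub H g) h = conjSub H (g * h) := by
  ext x
  simp only [mem_conjSub, mul_inv_rev]
  group

lemma conjSub_eq_self_iff {G : Type*} [Group G] {H : Subgroup G} {g : G} :
    conjSub H g = H ↔ g ∈ (Subgroup.normalizer (H : Set G)) := by
  rw [Subgroup.mem_normalizer_iff]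
  constructor
  · intro h n
    conv_lhs => rw [← h]
    exact mem_conjSub
  · intro h
    ext x
    rw [mem_conjSub]
    exact (h x).symm

lemma centralizer_le_normalizer' {G : Type*} [Group G] (T : Subgroup G) :
    Subgroup.centralizer (T : Set G) ≤ (Subgroup.normalizer (T : Set G)) := by
  intro c hc
  rw [Subgroup.mem_centralizer_iff] at hc
  rw [Subgroup.mem_normalizer_iff]
  intro h
  constructor
  · intro hh
    have e := hc h hh
    have : c * h * c⁻¹ = h := by rw [← e]; group
    rwa [this]
  · intro hmem
    have e := hc _ hmem
    have e2 : c * h = c * (c * h * c⁻¹) := by rw [← e]; group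
    have e3 : h = c * h * c⁻¹ := mul_left_cancel e2
    exact e3 ▸ hmem

lemma conj_mem_centralizer {G : Type*} [Group G] {T : Subgroup G} {n c : G}
    (hn : n ∈ (Subgroup.normalizer (T : Set G))) (hc : c ∈ Subgroup.centralizer (T : Set G)) :
    n * c * n⁻¹ ∈ Subgroup.centralizer (T : Set G) := by
  rw [Subgroup.mem_centralizer_iff] at hc ⊢
  rw [Subgroup.mem_normalizer_iff] at hn
  intro t ht
  have h1 : n⁻¹ * t * n ∈ T := by
    have := (hn (n⁻¹ * t * n)).mpr (by simpa [mul_assoc] using ht)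
    exact this
  have h2 := hc _ h1
  calc t * (n * c * n⁻¹) = n * ((n⁻¹ * t * n) * c) * n⁻¹ := by group
    _ = n * (c * (n⁻¹ * t * n)) * n⁻¹ := by rw [h2]
    _ = (n * c * n⁻¹) * t := by group

/-- Let `T ≤ C` be subgroups of a group `G` with `C ≤ C_G(T)`.  Assume
(i) `N_{C_G(T)}(C) = C`; (ii) `N_G(C) ≤ N_G(T)`; (iii) every `N_G(T)`-conjugate of `C`
is `C_G(T)`-conjugate to `C`.  Then `N_G(T) = C_G(T)·N_G(C)`, and there is a group
isomorphism `N_G(C)/C ≅ N_G(T)/C_G(T)`. -/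
theorem weyl_group_via_carter {G : Type*} [Group G] (T C : Subgroup G)
    (hTC : T ≤ C)
    (hCcent : C ≤ Subgroup.centralizer (T : Set G))
    (h1 : (Subgroup.normalizer (C : Set G)) ⊓ Subgroup.centralizer (T : Set G) = C)
    (h2 : (Subgroup.normalizer (C : Set G)) ≤ (Subgroup.normalizer (T : Set G)))
    (h3 : ∀ g ∈ (Subgroup.normalizer (T : Set G)), ∃ h ∈ Subgroup.centralizer (T : Set G),
        conjSub (conjSub C g) h = C) :
    ((Subgroup.normalizer (T : Set G)) : Set G) =
        (Subgroup.centralizer (T : Set G) : Set G) * ((Subgroup.normalizer (C : Set G)) : Set G) ∧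
      Nonempty ((↥(Subgroup.normalizer (C : Set G)) ⧸ C.subgroupOf (Subgroup.normalizer (C : Set G))) ≃*
        (↥(Subgroup.normalizer (T : Set G)) ⧸ (Subgroup.centralizer (T : Set G)).subgroupOf (Subgroup.normalizer (T : Set G)))) := by
  have hdecomp : ((Subgroup.normalizer (T : Set G)) : Set G) =
      (Subgroup.centralizer (T : Set G) : Set G) * ((Subgroup.normalizer (C : Set G)) : Set G) := by
    ext x
    simp only [Set.mem_mul, SetLike.mem_coe]
    constructor
    · intro hx
      obtain ⟨h, hh, hch⟩ := h3 x hx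
      rw [conjSub_conjSub, conjSub_eq_self_iff] at hch
      refine ⟨(x * h) * h⁻¹ * (x * h)⁻¹, ?_, x * h, hch, by group⟩
      exact conj_mem_centralizer (h2 hch) (inv_mem hh)
    · rintro ⟨c, hc, n, hn, rfl⟩
      exact mul_mem (centralizer_le_normalizer' T hc) (h2 hn)
  refine ⟨hdecomp, ?_⟩
  set N := (Subgroup.centralizer (T : Set G)).subgroupOf (Subgroup.normalizer (T : Set G))
  let φ : ↥(Subgroup.normalizer (C : Set G)) →* ↥(Subgroup.normalizer (T : Set G)) ⧸ N :=
    (QuotientGroup.mk' N).comp (Subgroup.inclusion h2)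
  have hker : φ.ker = C.subgroupOf (Subgroup.normalizer (C : Set G)) := by
    ext x
    simp only [φ, MonoidHom.mem_ker, MonoidHom.comp_apply, QuotientGroup.mk'_apply,
      QuotientGroup.eq_one_iff, N, Subgroup.mem_subgroupOf, Subgroup.coe_inclusion]
    constructor
    · intro hx
      have hm : (x : G) ∈ (Subgroup.normalizer (C : Set G)) ⊓ Subgroup.centralizer (T : Set G) := ⟨x.2, hx⟩
      rwa [h1] at hm
    · intro hx
      exact hCcent hx
  have hsurj : Function.Surjective φ := by
    intro q
    obtain ⟨y, rfl⟩ := QuotientGroup.mk'_surjective N q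
    have hy : (y : G) ∈ (Subgroup.centralizer (T : Set G) : Set G) * ((Subgroup.normalizer (C : Set G)) : Set G) := by
      rw [← hdecomp]; exact y.2
    obtain ⟨c, hc, n, hn, hcn⟩ := hy
    refine ⟨⟨n, hn⟩, ?_⟩
    show QuotientGroup.mk (Subgroup.inclusion h2 ⟨n, hn⟩) = QuotientGroup.mk y
    rw [QuotientGroup.eq]
    have : (n⁻¹ * c * n) ∈ Subgroup.centralizer (T : Set G) := by
      have := conj_mem_centralizer (inv_mem (h2 hn)) hc
      simpa using this
    show ((Subgroup.inclusion h2 ⟨n, hn⟩ : ↥(Subgroup.normalizer (T : Set G))) : G)⁻¹ * (y : G) ∈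
      Subgroup.centralizer (T : Set G)
    have hcoe : ((Subgroup.inclusion h2 ⟨n, hn⟩ : ↥(Subgroup.normalizer (T : Set G))) : G) = n := rfl
    rw [hcoe, ← hcn]
    simpa [mul_assoc] using this
  exact ⟨(QuotientGroup.quotientMulEquivOfEq hker.symm).trans
    (QuotientGroup.quotientKerEquivOfSurjective φ hsurj)⟩
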